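/- Let c ∈ ℂ and p ∈ ℕ, and let D denote the operator sending a differentiable function g : ℂ \ {0} → ℂ to z ↦ z·g′(z). Then z^p · exp(c/z) · (D^p (λ ↦ exp(−c/λ)))(z) tends to c^p as z → 0 with z ∈ ℂ \ {0}. -/

import Mathlib

/-- The operator `D = z·d/dz` on functions on `ℂ`. -/
noncomputable def Dop : (ℂ → ℂ) → (ℂ → ℂ) := fun g z => z * deriv g z

open Polynomial Filter

lemma key (c : ℂ) (p : ℕ) :
    ∃ P : Polynomial ℂ, P.Monic ∧ P.natDegree = p ∧
      ∀ z : ℂ, z ≠ 0 →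
        Dop^[p] (fun w : ℂ => Complex.exp (-c / w)) z
          = P.eval (c / z) * Complex.exp (-c / z) := by
  induction p with
  | zero =>
    exact ⟨1, monic_one, natDegree_one, fun z _ => by simp⟩
  | succ p ih =>
    obtain ⟨P, hM, hd, hP⟩ := ih
    have hsub : (P - P.derivative).Monic := by
      have := Polynomial.degree_derivative_lt hM.ne_zero
      have : (P + (-P.derivative)).Monic :=
        hM.add_of_left (by simpa using this)
      simpa [sub_eq_add_neg] using this
    refine ⟨X * (P - P.derivative), monic_X.mul hsub, ?_, ?_⟩
    · rw [natDegree_mul X_ne_zero hsub.ne_zero, natDegree_X]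
      have : (P - P.derivative).natDegree = p := by
        rcases eq_or_ne p 0 with h0 | h0
        · subst h0
          rw [Polynomial.eq_C_of_natDegree_eq_zero hd] at *
          simp
        · rw [← hd]
          apply natDegree_sub_eq_left_of_natDegree_lt
          exact lt_of_lt_of_le (Polynomial.natDegree_derivative_lt (hd ▸ h0)) le_rfl
      omega
    · intro z hz
      rw [Function.iterate_succ_apply']
      show z * deriv (Dop^[p] fun w : ℂ => Complex.exp (-c / w)) z = _
      have hopen : IsOpen {(0:ℂ)}ᶜ := isOpen_compl_singleton
      have heq : (Dop^[p] fun w : ℂ => Complex.exp (-c / w))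
          =ᶠ[nhds z] fun w => P.eval (c / w) * Complex.exp (-c / w) := by
        filter_upwards [hopen.mem_nhds hz] with w hw using hP w hw
      rw [heq.deriv_eq]
      have h1 : HasDerivAt (fun w : ℂ => c / w) (c * (-(z ^ 2)⁻¹)) z := by
        simpa [div_eq_mul_inv] using (hasDerivAt_inv hz).const_mul c
      have h2 : HasDerivAt (fun w : ℂ => -c / w) (-c * (-(z ^ 2)⁻¹)) z := by
        simpa [div_eq_mul_inv] using (hasDerivAt_inv hz).const_mul (-c)
      have h3 : HasDerivAt (fun w : ℂ => P.eval (c / w))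
          (P.derivative.eval (c / z) * (c * (-(z ^ 2)⁻¹))) z :=
        (P.hasDerivAt (c / z)).comp z h1
      have h4 : HasDerivAt (fun w : ℂ => Complex.exp (-c / w))
          (Complex.exp (-c / z) * (-c * (-(z ^ 2)⁻¹))) z :=
        (Complex.hasDerivAt_exp (-c / z)).comp z h2
      rw [show (fun w : ℂ => P.eval (c / w) * Complex.exp (-c / w)) = (fun w : ℂ => P.eval (c / w)) * (fun w : ℂ => Complex.exp (-c / w)) from rfl, (h3.mul h4).deriv]
      simp only [eval_mul, eval_sub, eval_X]
      field_simp
      ring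

/-- For `c ∈ ℂ` and `p ∈ ℕ`,
`z^p · e^{c/z} · (D^p e^{−c/·})(z) → c^p` as `z → 0` through nonzero values
(the computation `z^p e^{c/z}(z∂_z)^p(e^{−c/z}) = c^p + o(1)` from Lemma 6.9 of
the paper). -/
theorem stmt_14 (c : ℂ) (p : ℕ) :
    Filter.Tendsto
      (fun z : ℂ => z ^ p * Complex.exp (c / z)
        * (Dop^[p] (fun w : ℂ => Complex.exp (-c / w))) z)
      (nhdsWithin 0 {(0 : ℂ)}ᶜ) (nhds (c ^ p)) := by
  obtain ⟨P, hM, hd, hP⟩ := key c p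
  set g : ℂ → ℂ := fun z => ∑ k ∈ Finset.range (p + 1), P.coeff k * c ^ k * z ^ (p - k)
    with hg
  have heq : (fun z : ℂ => z ^ p * Complex.exp (c / z)
        * (Dop^[p] (fun w : ℂ => Complex.exp (-c / w))) z)
      =ᶠ[nhdsWithin 0 {(0 : ℂ)}ᶜ] g := by
    filter_upwards [self_mem_nhdsWithin] with z hz
    have hz : z ≠ 0 := hz
    rw [hP z hz]
    have hexp : Complex.exp (c / z) * Complex.exp (-c / z) = 1 := by
      rw [← Complex.exp_add]; simp [neg_div]
    have heval : P.eval (c / z)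
        = ∑ k ∈ Finset.range (p + 1), P.coeff k * (c / z) ^ k := by
      rw [Polynomial.eval_eq_sum_range, hd]
    calc z ^ p * Complex.exp (c / z) * (P.eval (c / z) * Complex.exp (-c / z))
        = z ^ p * P.eval (c / z) * (Complex.exp (c / z) * Complex.exp (-c / z)) := by ring
      _ = z ^ p * P.eval (c / z) := by rw [hexp, mul_one]
      _ = g z := by
          rw [heval, Finset.mul_sum, hg]
          refine Finset.sum_congr rfl fun k hk => ?_
          have hk : k ≤ p := Nat.lt_succ_iff.mp (Finset.mem_range.mp hk)
          have hzp : z ^ p = z ^ (p - k) * z ^ k := (pow_sub_mul_pow z hk).symm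
          rw [hzp, div_pow]
          field_simp
  refine Tendsto.congr' heq.symm ?_
  have hcont : Continuous g := by
    apply continuous_finset_sum
    intro k _
    fun_prop
  have h0 : g 0 = c ^ p := by
    show (∑ k ∈ Finset.range (p + 1), P.coeff k * c ^ k * (0:ℂ) ^ (p - k)) = c ^ p
    rw [Finset.sum_eq_single_of_mem p (Finset.self_mem_range_succ p)]
    · have : P.coeff p = 1 := by
        have := hM.coeff_natDegree
        rwa [hd] at this
      simp [this]
    · intro k hk hkp
      have hk : k ≤ p := Nat.lt_succ_iff.mp (Finset.mem_range.mp hk)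
      have : p - k ≠ 0 := by omega
      simp [zero_pow this]
  rw [← h0]
  exact (hcont.tendsto 0).mono_left nhdsWithin_le_nhds
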